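/- If the differential polynomial ring R = D[t;δ] is a simple ring, then there exists no monic f ∈ R of degree m ≥ 2 such that the Petit algebra S_f is not associative and D ⊆ Nuc_r(S_f). -/

import Mathlib

open Finsupp

section Defs

variable {D R : Type*}

/-- `δ` is a derivation on the (possibly noncommutative) ring `D`. -/
def IsDeriv [Ring D] (δ : D → D) : Prop :=
  (∀ a b, δ (a + b) = δ a + δ b) ∧ ∀ a b, δ (a * b) = a * δ b + δ a * b

/-- `(R, i, t, coeff)` realizes the differential polynomial ring `D[t;δ]`:
`t * a = a * t + δ a` for `a ∈ D`, and every element of `R` is uniquely of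
the form `∑ aₙ tⁿ`, the `aₙ` being recorded by the additive equivalence `coeff`. -/
def IsDiffPolyRing [Ring D] [Ring R] (δ : D → D) (i : D →+* R) (t : R)
    (coeff : R ≃+ (ℕ →₀ D)) : Prop :=
  (∀ a : D, t * i a = i a * t + i (δ a)) ∧
    ∀ (n : ℕ) (a : D), coeff.symm (Finsupp.single n a) = i a * t ^ n

/-- `r` has degree `< m`. -/
def DegLt [Ring D] [Ring R] (coeff : R ≃+ (ℕ →₀ D)) (m : ℕ) (r : R) : Prop :=
  ∀ n, m ≤ n → coeff r n = 0

/-- `f` is monic of degree `m`. -/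
def MonicDeg [Ring D] [Ring R] (coeff : R ≃+ (ℕ →₀ D)) (m : ℕ) (f : R) : Prop :=
  coeff f m = 1 ∧ ∀ n, m < n → coeff f n = 0

/-- The carrier of the Petit algebra `S_f`: all polynomials of degree `< m`. -/
def SfSet [Ring D] [Ring R] (coeff : R ≃+ (ℕ →₀ D)) (m : ℕ) : Set R :=
  {r | DegLt coeff m r}

/-- `mul` is the Petit multiplication: `mul x y = x·y mod_r f`, i.e. `mul x y`
has degree `< m` and differs from `x·y` by a left multiple of `f`. -/
def IsPetitMul [Ring D] [Ring R] (coeff : R ≃+ (ℕ →₀ D)) (f : R) (m : ℕ)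
    (mul : R → R → R) : Prop :=
  ∀ x y : R, DegLt coeff m (mul x y) ∧ ∃ q : R, x * y = q * f + mul x y

/-- `f` is right semi-invariant: `f·a ∈ D·f` for all `a ∈ D`. -/
def RightSemiInvariant [Ring D] [Ring R] (i : D →+* R) (f : R) : Prop :=
  ∀ a : D, ∃ b : D, f * i a = i b * f

/-- `f` is two-sided (invariant): the left ideal `Rf` is a two-sided ideal. -/
def TwoSidedElem [Ring R] (f : R) : Prop :=
  ∀ r : R, ∃ q : R, f * r = q * f

/-- `f` (of degree `m`) is irreducible: it has no factorization into factors
of degree `< m`. -/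
def IrredDeg [Ring D] [Ring R] (coeff : R ≃+ (ℕ →₀ D)) (m : ℕ) (f : R) : Prop :=
  ¬∃ g h : R, f = g * h ∧ DegLt coeff m g ∧ DegLt coeff m h

/-- `f` (of degree `m`) is irreducible as a polynomial with coefficients in
the subfield `Fset` of `D`. -/
def IrredOver [Ring D] [Ring R] (coeff : R ≃+ (ℕ →₀ D)) (Fset : Set D) (m : ℕ)
    (f : R) : Prop :=
  ¬∃ g h : R, f = g * h ∧ DegLt coeff m g ∧ DegLt coeff m h ∧
    (∀ n, coeff g n ∈ Fset) ∧ ∀ n, coeff h n ∈ Fset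

/-- Left nucleus of the algebra `(S, mul)`. -/
def LeftNuc [Ring R] (S : Set R) (mul : R → R → R) : Set R :=
  {x ∈ S | ∀ y ∈ S, ∀ z ∈ S, mul (mul x y) z = mul x (mul y z)}

/-- Middle nucleus of the algebra `(S, mul)`. -/
def MidNuc [Ring R] (S : Set R) (mul : R → R → R) : Set R :=
  {x ∈ S | ∀ y ∈ S, ∀ z ∈ S, mul (mul y x) z = mul y (mul x z)}

/-- Right nucleus of the algebra `(S, mul)`. -/
def RightNuc [Ring R] (S : Set R) (mul : R → R → R) : Set R :=
  {x ∈ S | ∀ y ∈ S, ∀ z ∈ S, mul (mul y z) x = mul y (mul z x)}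

/-- `(S, mul)` is a division algebra: all nonzero left and right
multiplications are bijective. -/
def IsDivAlg [Ring R] (S : Set R) (mul : R → R → R) : Prop :=
  ∀ x ∈ S, x ≠ 0 → Set.BijOn (mul x) S S ∧ Set.BijOn (fun y => mul y x) S S

/-- `(S, mul)` is associative. -/
def IsAssocOn [Ring R] (S : Set R) (mul : R → R → R) : Prop :=
  ∀ x ∈ S, ∀ y ∈ S, ∀ z ∈ S, mul (mul x y) z = mul x (mul y z)

/-- The constants of `δ`. -/
def ConstSet [Ring D] (δ : D → D) : Set D := {a | δ a = 0}

/-- The center of `D`. -/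
def CenterSet (D : Type*) [Ring D] : Set D := {a | ∀ b, a * b = b * a}

/-- `F₀ = Const(δ) ∩ C(D)`. -/
def F0Set [Ring D] (δ : D → D) : Set D := ConstSet δ ∩ CenterSet D

/-- The elements of the Petit algebra all of whose coefficients lie in `Fset`,
e.g. `Fset ⊕ Fset·t ⊕ ⋯ ⊕ Fset·t^{m-1}`. -/
def SubCoeffSet [Ring D] [Ring R] (coeff : R ≃+ (ℕ →₀ D)) (m : ℕ)
    (Fset : Set D) : Set R :=
  {r | DegLt coeff m r ∧ ∀ n, coeff r n ∈ Fset}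

/-- `S ⊆ R` has dimension `k` over the subfield `Fset ⊆ D` (acting through `i`):
there is an `Fset`-basis of size `k`. -/
def HasDim [Ring D] [Ring R] (Fset : Set D) (i : D →+* R) (S : Set R) (k : ℕ) : Prop :=
  ∃ b : Fin k → R, (∀ j, b j ∈ S) ∧
    ∀ x ∈ S, ∃! c : Fin k → D, (∀ j, c j ∈ Fset) ∧ x = ∑ j, i (c j) * b j

/-- `S ⊆ D` has dimension `k` over the subfield `Fset ⊆ D`. -/
def HasDimIn [Ring D] (Fset : Set D) (S : Set D) (k : ℕ) : Prop :=
  ∃ b : Fin k → D, (∀ j, b j ∈ S) ∧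
    ∀ x ∈ S, ∃! c : Fin k → D, (∀ j, c j ∈ Fset) ∧ x = ∑ j, c j * b j

/-- Substitution of `x` for `t` in `r = ∑ aₙ tⁿ`. -/
noncomputable def substT [Ring D] [Ring R] (coeff : R ≃+ (ℕ →₀ D)) (i : D →+* R) (r x : R) : R :=
  (coeff r).sum fun n c => i c * x ^ n

/-- `V_f(b)`: the constant `f(t) − f(t−b)`. -/
noncomputable def Vf [Ring D] [Ring R] (coeff : R ≃+ (ℕ →₀ D)) (i : D →+* R) (t f : R) (b : D) : D :=
  coeff (f - substT coeff i f (t - i b)) 0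

/-- `V_p(b)`: the constant with `(t−b)^p = t^p − V_p(b)`. -/
noncomputable def Vp [Ring D] [Ring R] (coeff : R ≃+ (ℕ →₀ D)) (i : D →+* R) (t : R) (p : ℕ)
    (b : D) : D :=
  coeff (t ^ p - (t - i b) ^ p) 0

/-- For commutative coefficients, `V_p(b) = b^p + δ^{p−1}(b)`. -/
def VpFun [Ring D] (δ : D → D) (p : ℕ) : D → D := fun b => b ^ p + δ^[p - 1] b

/-- `V(a) = V_{p^e}(a) + c₁ V_{p^{e−1}}(a) + ⋯ + c_e a`, computed with
`V_p(b) = b^p + δ^{p−1}(b)` (commutative case). -/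
def Vg [Ring D] (δ : D → D) (p e : ℕ) (c : Fin e → D) : D → D :=
  fun a => (VpFun δ p)^[e] a + ∑ j : Fin e, c j * (VpFun δ p)^[e - 1 - (j : ℕ)] a

/-- `V(a) = V_{p^e}(a) + c₁ V_{p^{e−1}}(a) + ⋯ + c_e a`, with `V_p` defined by
the identity `(t−b)^p = t^p − V_p(b)` in `D[t;δ]`. -/
noncomputable def VgR [Ring D] [Ring R] (coeff : R ≃+ (ℕ →₀ D)) (i : D →+* R) (t : R) (p e : ℕ)
    (c : Fin e → D) : D → D :=
  fun a => (Vp coeff i t p)^[e] a + ∑ j : Fin e, c j * (Vp coeff i t p)^[e - 1 - (j : ℕ)] a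

/-- The map `G_{id,−a}` sending `∑ bₙ tⁿ` to `∑ bₙ (t−a)ⁿ`. -/
noncomputable def Gmap [Ring D] [Ring R] (coeff : R ≃+ (ℕ →₀ D)) (i : D →+* R) (t : R) (a : D) :
    R → R :=
  fun r => substT coeff i r (t - i a)

/-- `H` is an isomorphism of `Fset`-algebras from `(S, mul)` onto `(S', mul')`. -/
def IsAlgIso [Ring D] [Ring R] (Fset : Set D) (i : D →+* R) (S S' : Set R)
    (mul mul' : R → R → R) (H : R → R) : Prop :=
  Set.BijOn H S S' ∧ (∀ x ∈ S, ∀ y ∈ S, H (x + y) = H x + H y) ∧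
    (∀ x ∈ S, ∀ y ∈ S, H (mul x y) = mul' (H x) (H y)) ∧ H 1 = 1 ∧
    ∀ a ∈ Fset, ∀ x ∈ S, H (i a * x) = i a * H x

/-- `H` is an `Fset`-algebra automorphism of the Petit algebra `(S, mul)`. -/
def IsAut [Ring D] [Ring R] (Fset : Set D) (i : D →+* R) (S : Set R)
    (mul : R → R → R) (H : R → R) : Prop :=
  IsAlgIso Fset i S S mul mul H

/-- The operator `δ^{p^e} + c₁ δ^{p^{e−1}} + ⋯ + c_e δ` vanishes on `Cset`,
i.e. the `p`-polynomial `t^{p^e} + c₁ t^{p^{e−1}} + ⋯ + c_e t` annihilates `δ|_{Cset}`. -/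
def PPolyAnnOn [Ring D] (δ : D → D) (Cset : Set D) (p e : ℕ) (c : Fin e → D) : Prop :=
  ∀ a ∈ Cset, δ^[p ^ e] a + ∑ j : Fin e, c j * δ^[p ^ (e - 1 - (j : ℕ))] a = 0

/-- `t^{p^e} + c₁ t^{p^{e−1}} + ⋯ + c_e t` (coefficients in `Fset`) is the minimum
`p`-polynomial of `δ` restricted to `Cset`. -/
def IsMinPPoly [Ring D] (δ : D → D) (Cset Fset : Set D) (p e : ℕ)
    (c : Fin e → D) : Prop :=
  (∀ j, c j ∈ Fset) ∧ PPolyAnnOn δ Cset p e c ∧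
    ∀ e' : ℕ, e' < e → ∀ c' : Fin e' → D, (∀ j, c' j ∈ Fset) →
      ¬PPolyAnnOn δ Cset p e' c'

/-- The natural map from `D[X]` to `R`, `∑ aₙ Xⁿ ↦ ∑ aₙ tⁿ`. -/
noncomputable def polyToR [Ring D] [Ring R] (i : D →+* R) (t : R) (q : Polynomial D) : R :=
  q.sum fun n a => i a * t ^ n

/-- The element `f ∈ R` rewritten as an ordinary polynomial in `D[X]`. -/
noncomputable def coeffPoly [Ring D] [Ring R] (coeff : R ≃+ (ℕ →₀ D)) (f : R) : Polynomial D :=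
  (coeff f).sum fun n a => Polynomial.C a * Polynomial.X ^ n

/-- The set `T = Fset ⊕ Fset·t ⊕ ⋯ ⊕ Fset·t^{m−1} ⊆ S_f` is isomorphic, as a
ring, to the quotient `Fset[X]/(f)`: the natural map `θ : ∑ aₙ Xⁿ ↦ ∑ aₙ tⁿ`,
from polynomials over `Fset` of degree `< m` with multiplication given by
reduction mod `f`, is a bijection onto `T` respecting all the operations. -/
def IsPolyQuotIso [Ring D] [Ring R] (Fset : Set D) (i : D →+* R)
    (coeff : R ≃+ (ℕ →₀ D)) (t f : R) (m : ℕ) (mul : R → R → R) (T : Set R) : Prop :=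
  Set.BijOn (polyToR i t)
    {q : Polynomial D | (∀ n, q.coeff n ∈ Fset) ∧ q.degree < (m : WithBot ℕ)} T ∧
  (∀ q q' : Polynomial D, polyToR i t (q + q') = polyToR i t q + polyToR i t q') ∧
  polyToR i t 1 = 1 ∧
  ∀ q ∈ {q : Polynomial D | (∀ n, q.coeff n ∈ Fset) ∧ q.degree < (m : WithBot ℕ)},
    ∀ q' ∈ {q : Polynomial D | (∀ n, q.coeff n ∈ Fset) ∧ q.degree < (m : WithBot ℕ)},
      ∃ s r : Polynomial D, q * q' = s * coeffPoly coeff f + r ∧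
        r.degree < (m : WithBot ℕ) ∧
        polyToR i t r = mul (polyToR i t q) (polyToR i t q')

end Defs

section MyAux

variable {D R : Type*} [DivisionRing D] [Ring R]
variable {δ : D → D} {i : D →+* R} {t : R} {coeff : R ≃+ (ℕ →₀ D)}

theorem my_deriv_zero (hδ : IsDeriv δ) : δ 0 = 0 := by
  have h := hδ.1 0 0
  simp only [add_zero] at h
  exact (left_eq_add.mp h)

theorem my_deriv_one (hδ : IsDeriv δ) : δ 1 = 0 := by
  have h := hδ.2 1 1
  simp only [mul_one, one_mul] at h
  exact (left_eq_add.mp h)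

theorem my_coeff_monomial (hR : IsDiffPolyRing δ i t coeff) (n : ℕ) (a : D) :
    coeff (i a * t ^ n) = Finsupp.single n a := by
  rw [← hR.2 n a, AddEquiv.apply_symm_apply]

theorem my_recon (hR : IsDiffPolyRing δ i t coeff) (r : R) :
    (coeff r).sum (fun n a => i a * t ^ n) = r := by
  apply coeff.injective
  rw [Finsupp.sum, map_sum]
  simp only [my_coeff_monomial hR]
  exact Finsupp.sum_single (coeff r)

theorem my_add_induction (hR : IsDiffPolyRing δ i t coeff) (P : R → Prop)
    (h0 : P 0) (hadd : ∀ x y, P x → P y → P (x + y))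
    (hmono : ∀ (n : ℕ) (a : D), P (i a * t ^ n)) : ∀ r, P r := by
  intro r
  rw [← my_recon hR r, Finsupp.sum]
  exact Finset.sum_induction _ P hadd h0 (fun n _ => hmono n _)

theorem my_coeff_i (hR : IsDiffPolyRing δ i t coeff) (a : D) :
    coeff (i a) = Finsupp.single 0 a := by
  have := my_coeff_monomial hR 0 a
  rwa [pow_zero, mul_one] at this

theorem my_coeff_tpow (hR : IsDiffPolyRing δ i t coeff) (n : ℕ) :
    coeff (t ^ n) = Finsupp.single n 1 := by
  have := my_coeff_monomial hR n 1
  rwa [map_one, one_mul] at this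

theorem my_coeff_one (hR : IsDiffPolyRing δ i t coeff) :
    coeff (1 : R) = Finsupp.single 0 1 := by
  have := my_coeff_tpow hR 0
  rwa [pow_zero] at this

theorem my_coeff_t (hR : IsDiffPolyRing δ i t coeff) :
    coeff t = Finsupp.single 1 1 := by
  have := my_coeff_tpow hR 1
  rwa [pow_one] at this

theorem my_coeff_apply_add (x y : R) (n : ℕ) :
    coeff (x + y) n = coeff x n + coeff y n := by
  rw [map_add, Finsupp.add_apply]

theorem my_coeff_apply_sub (x y : R) (n : ℕ) :
    coeff (x - y) n = coeff x n - coeff y n := by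
  rw [map_sub, Finsupp.sub_apply]

theorem my_coeff_const_mul (hR : IsDiffPolyRing δ i t coeff) (b : D) (r : R) (n : ℕ) :
    coeff (i b * r) n = b * coeff r n := by
  induction r using my_add_induction hR with
  | h0 => simp
  | hadd x y hx hy => rw [mul_add, my_coeff_apply_add, my_coeff_apply_add, hx, hy, mul_add]
  | hmono k a =>
    rw [← mul_assoc, ← map_mul, my_coeff_monomial hR, my_coeff_monomial hR]
    simp only [Finsupp.single_apply]
    split <;> simp

theorem my_coeff_mul_tpow (hR : IsDiffPolyRing δ i t coeff) (r : R) (l n : ℕ) :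
    coeff (r * t ^ l) n = if l ≤ n then coeff r (n - l) else 0 := by
  induction r using my_add_induction hR with
  | h0 => simp
  | hadd x y hx hy =>
    rw [add_mul, my_coeff_apply_add, hx, hy, my_coeff_apply_add]
    split <;> simp
  | hmono k a =>
    rw [mul_assoc, ← pow_add, my_coeff_monomial hR, my_coeff_monomial hR]
    simp only [Finsupp.single_apply]
    rcases le_or_gt l n with h | h
    · rw [if_pos h]
      by_cases hk : k = n - l
      · rw [if_pos (by omega), if_pos hk]
      · rw [if_neg (by omega), if_neg hk]
    · rw [if_neg (by omega), if_neg (by omega)]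

theorem my_coeff_t_mul (hδ : IsDeriv δ) (hR : IsDiffPolyRing δ i t coeff) (r : R) (n : ℕ) :
    coeff (t * r) n = (if n = 0 then 0 else coeff r (n - 1)) + δ (coeff r n) := by
  induction r using my_add_induction hR with
  | h0 => simp [my_deriv_zero hδ]
  | hadd x y hx hy =>
    rw [mul_add, my_coeff_apply_add, hx, hy, my_coeff_apply_add, my_coeff_apply_add,
      hδ.1]
    split <;> abel
  | hmono k a =>
    rw [← mul_assoc, hR.1 a, add_mul, mul_assoc, ← pow_succ']
    rw [my_coeff_apply_add, my_coeff_monomial hR, my_coeff_monomial hR,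
      my_coeff_monomial hR]
    simp only [Finsupp.single_apply]
    rw [apply_ite δ, my_deriv_zero hδ]
    split_ifs <;> simp_all <;> omega

theorem my_tpow_mul_deglt (hδ : IsDeriv δ) (hR : IsDiffPolyRing δ i t coeff)
    (j l : ℕ) (r : R) (hr : ∀ k, l < k → coeff r k = 0) :
    (∀ n, j + l < n → coeff (t ^ j * r) n = 0) ∧ coeff (t ^ j * r) (j + l) = coeff r l := by
  induction j with
  | zero =>
    simp only [pow_zero, one_mul, Nat.zero_add]
    exact ⟨hr, trivial⟩
  | succ j ih =>
    have key : t ^ (j + 1) * r = t * (t ^ j * r) := by rw [pow_succ', mul_assoc]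
    constructor
    · intro n hn
      rw [key, my_coeff_t_mul hδ hR]
      rw [if_neg (by omega), ih.1 (n - 1) (by omega), ih.1 n (by omega), my_deriv_zero hδ,
        add_zero]
    · rw [key, my_coeff_t_mul hδ hR, if_neg (by omega)]
      have h1 : j + 1 + l - 1 = j + l := by omega
      rw [h1, ih.2, ih.1 (j + 1 + l) (by omega), my_deriv_zero hδ, add_zero]

theorem my_coeff_mul (hR : IsDiffPolyRing δ i t coeff) (x y : R) (N : ℕ) :
    coeff (x * y) N = ∑ j ∈ (coeff x).support, (coeff x) j * coeff (t ^ j * y) N := by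
  conv_lhs => rw [← my_recon hR x]
  rw [Finsupp.sum, Finset.sum_mul, map_sum, Finset.sum_apply']
  refine Finset.sum_congr rfl fun j hj => ?_
  rw [mul_assoc, my_coeff_const_mul hR]

theorem my_coeff_mul_top (hδ : IsDeriv δ) (hR : IsDiffPolyRing δ i t coeff)
    (x y : R) (k l : ℕ) (hx : ∀ n, k < n → coeff x n = 0) (hy : ∀ n, l < n → coeff y n = 0) :
    coeff (x * y) (k + l) = coeff x k * coeff y l ∧
      ∀ N, k + l < N → coeff (x * y) N = 0 := by
  constructor
  · rw [my_coeff_mul hR]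
    rw [Finset.sum_eq_single k]
    · rw [(my_tpow_mul_deglt hδ hR k l y hy).2]
    · intro j hj hjk
      rcases lt_or_gt_of_ne hjk with h | h
      · rw [(my_tpow_mul_deglt hδ hR j l y hy).1 (k + l) (by omega), mul_zero]
      · rw [hx j h, zero_mul]
    · intro hk
      rw [Finsupp.notMem_support_iff.mp hk, zero_mul]
  · intro N hN
    rw [my_coeff_mul hR]
    apply Finset.sum_eq_zero
    intro j hj
    rcases le_or_gt j k with h | h
    · rw [(my_tpow_mul_deglt hδ hR j l y hy).1 N (by omega), mul_zero]
    · rw [hx j h, zero_mul]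

theorem my_tpow_const (hδ : IsDeriv δ) (hR : IsDiffPolyRing δ i t coeff) (j : ℕ) (a : D) :
    (∀ n, j < n → coeff (t ^ j * i a) n = 0) ∧ coeff (t ^ j * i a) j = a ∧
      ∀ jj, j = jj + 1 → coeff (t ^ j * i a) jj = j • δ a := by
  induction j with
  | zero =>
    simp only [pow_zero, one_mul, my_coeff_i hR]
    refine ⟨fun n hn => ?_, ?_, fun jj h => by omega⟩
    · rw [Finsupp.single_apply, if_neg (by omega)]
    · rw [Finsupp.single_apply, if_pos rfl]
  | succ j ih =>
    have key : t ^ (j + 1) * i a = t * (t ^ j * i a) := by rw [pow_succ', mul_assoc]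
    obtain ⟨ih1, ih2, ih3⟩ := ih
    refine ⟨fun n hn => ?_, ?_, fun jj h => ?_⟩
    · rw [key, my_coeff_t_mul hδ hR, if_neg (by omega), ih1 (n - 1) (by omega),
        ih1 n (by omega), my_deriv_zero hδ, add_zero]
    · rw [key, my_coeff_t_mul hδ hR, if_neg (by omega)]
      simp only [Nat.add_sub_cancel]
      rw [ih2, ih1 (j + 1) (by omega), my_deriv_zero hδ, add_zero]
    · have hjj : jj = j := by omega
      rw [hjj, key, my_coeff_t_mul hδ hR, ih2]
      rcases Nat.eq_zero_or_pos j with rfl | hj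
      · simp
      · rw [if_neg (by omega), ih3 (j - 1) (by omega), succ_nsmul]

theorem my_const_recon (hR : IsDiffPolyRing δ i t coeff) (x : R)
    (h : ∀ n, 0 < n → coeff x n = 0) : x = i (coeff x 0) := by
  apply coeff.injective
  rw [my_coeff_i hR]
  ext n
  rcases Nat.eq_zero_or_pos n with rfl | hn
  · rw [Finsupp.single_apply, if_pos rfl]
  · rw [Finsupp.single_apply, if_neg (by omega), h n hn]

theorem my_coeff_comm (hδ : IsDeriv δ) (hR : IsDiffPolyRing δ i t coeff) (r : R) (n : ℕ) :
    coeff (t * r - r * t) n = δ (coeff r n) := by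
  have h1 : r * t = r * t ^ 1 := by rw [pow_one]
  rw [my_coeff_apply_sub, my_coeff_t_mul hδ hR, h1, my_coeff_mul_tpow hR]
  rcases Nat.eq_zero_or_pos n with rfl | hn
  · rw [if_pos rfl, if_neg (by omega), zero_add, sub_zero]
  · rw [if_neg (by omega), if_pos (by omega), add_sub_cancel_left]

theorem my_commute_all (hR : IsDiffPolyRing δ i t coeff) (q : R)
    (hqa : ∀ a, q * i a = i a * q) (hqt : q * t = t * q) : ∀ r, q * r = r * q := by
  intro r
  induction r using my_add_induction hR with
  | h0 => rw [mul_zero, zero_mul]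
  | hadd x y hx hy => rw [mul_add, add_mul, hx, hy]
  | hmono k a =>
    have hpow : q * t ^ k = t ^ k * q := (Commute.pow_right hqt k)
    rw [← mul_assoc, hqa, mul_assoc, hpow, ← mul_assoc]

theorem my_pow_top (hδ : IsDeriv δ) (hR : IsDiffPolyRing δ i t coeff)
    (x : R) (d : ℕ) (hx : ∀ n, d < n → coeff x n = 0) :
    ∀ k, (∀ n, k * d < n → coeff (x ^ k) n = 0) ∧ coeff (x ^ k) (k * d) = (coeff x d) ^ k := by
  intro k
  induction k with
  | zero =>
    simp only [pow_zero, zero_mul, my_coeff_one hR]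
    refine ⟨fun n hn => ?_, ?_⟩
    · rw [Finsupp.single_apply, if_neg (by omega)]
    · rw [Finsupp.single_apply, if_pos rfl]
  | succ k ih =>
    have key : x ^ (k + 1) = x ^ k * x := pow_succ x k
    have h2 := my_coeff_mul_top hδ hR (x ^ k) x (k * d) d ih.1 hx
    have harith : (k + 1) * d = k * d + d := by ring
    refine ⟨fun n hn => ?_, ?_⟩
    · rw [key]
      exact h2.2 n (by omega)
    · rw [key, harith, h2.1, ih.2, pow_succ]

theorem my_central_contra (hδ : IsDeriv δ) (hR : IsDiffPolyRing δ i t coeff)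
    (hsimple : IsSimpleRing R) (q : R) (l : ℕ) (hl : 1 ≤ l)
    (htop : coeff q l ≠ 0) (hdeg : ∀ n, l < n → coeff q n = 0)
    (hqa : ∀ a, q * i a = i a * q) (hqt : q * t = t * q) : False := by
  haveI := hsimple
  have hcent := my_commute_all hR q hqa hqt
  set J : TwoSidedIdeal R := TwoSidedIdeal.mk' {x | ∃ r, x = r * q}
    ⟨0, (zero_mul q).symm⟩
    (fun {x y} hx hy => by
      obtain ⟨r1, rfl⟩ := hx; obtain ⟨r2, rfl⟩ := hy
      exact ⟨r1 + r2, (add_mul r1 r2 q).symm⟩)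
    (fun {x} hx => by
      obtain ⟨r, rfl⟩ := hx
      exact ⟨-r, (neg_mul r q).symm⟩)
    (fun {x y} hy => by
      obtain ⟨r, rfl⟩ := hy
      exact ⟨x * r, (mul_assoc x r q).symm⟩)
    (fun {x y} hx => by
      obtain ⟨r, rfl⟩ := hx
      exact ⟨r * y, by rw [mul_assoc, mul_assoc, hcent y]⟩) with hJ
  have hq0 : q ≠ 0 := by
    intro h
    apply htop
    rw [h, map_zero, Finsupp.coe_zero, Pi.zero_apply]
  have hqJ : q ∈ J := by
    rw [hJ, TwoSidedIdeal.mem_mk']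
    exact ⟨1, (one_mul q).symm⟩
  have h1J : (1 : R) ∈ J := IsSimpleRing.one_mem_of_ne_zero_mem J hq0 hqJ
  rw [hJ, TwoSidedIdeal.mem_mk'] at h1J
  obtain ⟨r, hr⟩ := h1J
  have hrne : r ≠ 0 := by
    intro h
    rw [h, zero_mul] at hr
    exact one_ne_zero hr
  have hcne : coeff r ≠ 0 := by
    intro h
    apply hrne
    rw [← coeff.symm_apply_apply r, h, map_zero]
  have hsupp : (coeff r).support.Nonempty := Finsupp.support_nonempty_iff.mpr hcne
  set k := (coeff r).support.max' hsupp with hk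
  have hkmem : coeff r k ≠ 0 :=
    Finsupp.mem_support_iff.mp ((coeff r).support.max'_mem hsupp)
  have hkmax : ∀ n, k < n → coeff r n = 0 := by
    intro n hn
    by_contra hne
    exact absurd (Finset.le_max' _ n (Finsupp.mem_support_iff.mpr hne)) (by omega)
  have := (my_coeff_mul_top hδ hR r q k l hkmax hdeg).1
  have hne : coeff (r * q) (k + l) ≠ 0 := by
    rw [this]
    exact mul_ne_zero hkmem htop
  apply hne
  rw [← hr, my_coeff_one hR, Finsupp.single_apply, if_neg (by omega)]

theorem my_exists_top (q : R) (hq : q ≠ 0) :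
    ∃ k, (coeff q) k ≠ 0 ∧ ∀ n, k < n → coeff q n = 0 := by
  have hcne : coeff q ≠ 0 := fun h => hq (by rw [← coeff.symm_apply_apply q, h, map_zero])
  have hsupp := Finsupp.support_nonempty_iff.mpr hcne
  refine ⟨(coeff q).support.max' hsupp,
    Finsupp.mem_support_iff.mp (Finset.max'_mem _ _), ?_⟩
  intro n hn
  by_contra hne
  exact absurd (Finset.le_max' _ n (Finsupp.mem_support_iff.mpr hne)) (by omega)

end MyAux

set_option maxHeartbeats 1000000

/-- if `R = D[t;δ]` is simple, there is no monic `f` of degree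
`m ≥ 2` such that `S_f` is not associative and `D ⊆ Nuc_r(S_f)`. -/
theorem stmt_2 {D R : Type*} [DivisionRing D] [Ring R]
    (δ : D → D) (hδ : IsDeriv δ) (hδ0 : δ ≠ 0)
    (i : D →+* R) (t : R) (coeff : R ≃+ (ℕ →₀ D))
    (hR : IsDiffPolyRing δ i t coeff)
    (hsimple : IsSimpleRing R) :
    ¬∃ (f : R) (m : ℕ) (mulS : R → R → R),
      2 ≤ m ∧ MonicDeg coeff m f ∧ IsPetitMul coeff f m mulS ∧
      ¬IsAssocOn (SfSet coeff m) mulS ∧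
      ∀ a : D, i a ∈ RightNuc (SfSet coeff m) mulS := by
  rintro ⟨f, m, mulS, hm, hmonic, hP, -, hnuc⟩
  classical
  haveI := hsimple
  have iinj : Function.Injective i := RingHom.injective i
  have hfdeg : ∀ n, m < n → coeff f n = 0 := hmonic.2
  have hconst_high : ∀ (a : D) (n : ℕ), 0 < n → coeff (i a) n = 0 := fun a n hn => by
    rw [my_coeff_i hR, Finsupp.single_apply, if_neg (by omega)]
  have hqzero : ∀ q : R, (∀ n, m ≤ n → coeff (q * f) n = 0) → q = 0 := by
    intro q hq
    by_contra hne
    obtain ⟨k, hk1, hk2⟩ := my_exists_top (coeff := coeff) q hne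
    have hmt := (my_coeff_mul_top hδ hR q f k m hk2 hfdeg).1
    have h0 := hq (k + m) (by omega)
    rw [hmt, hmonic.1, mul_one] at h0
    exact hk1 h0
  -- STEP A : f is right semi-invariant
  have hsemi : ∀ a : D, ∃ b : D, f * i a = i b * f := by
    intro a
    have htS : t ∈ SfSet coeff m := fun n hn => by
      rw [my_coeff_t hR, Finsupp.single_apply, if_neg (by omega)]
    have htm1S : t ^ (m - 1) ∈ SfSet coeff m := fun n hn => by
      rw [my_coeff_tpow hR, Finsupp.single_apply, if_neg (by omega)]
    obtain ⟨hd1, q1, hq1⟩ := hP t (i a)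
    have hta : ∀ n, m ≤ n → coeff (t * i a) n = 0 := by
      intro n hn
      rw [my_coeff_t_mul hδ hR, if_neg (show ¬n = 0 by omega),
        hconst_high a (n - 1) (by omega), hconst_high a n (by omega), my_deriv_zero hδ,
        add_zero]
    have hq1z : q1 = 0 := by
      apply hqzero
      intro n hn
      have hqf : q1 * f = t * i a - mulS t (i a) := eq_sub_of_add_eq hq1.symm
      rw [hqf, my_coeff_apply_sub, hta n hn, hd1 n hn, sub_zero]
    have hmul1 : mulS t (i a) = t * i a := by
      rw [hq1z, zero_mul, zero_add] at hq1
      exact hq1.symm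
    obtain ⟨hd2, q2, hq2⟩ := hP (t ^ (m - 1)) t
    have hpow : t ^ (m - 1) * t = t ^ m := by
      rw [← pow_succ]
      congr 1
      omega
    have hu := eq_sub_of_add_eq hq2.symm
    rw [hpow] at hu
    have hudeg : ∀ n, m ≤ n → coeff (t ^ m - f) n = 0 := by
      intro n hn
      rw [my_coeff_apply_sub, my_coeff_tpow hR]
      rcases eq_or_ne n m with rfl | hne
      · rw [Finsupp.single_apply, if_pos rfl, hmonic.1, sub_self]
      · rw [Finsupp.single_apply, if_neg (by omega), hfdeg n (by omega), sub_zero]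
    have hq21 : q2 - 1 = 0 := by
      apply hqzero
      intro n hn
      have hqf : (q2 - 1) * f = (t ^ m - f) - mulS (t ^ (m - 1)) t := by
        rw [sub_mul, one_mul, hu]
        abel
      rw [hqf, my_coeff_apply_sub, hudeg n hn, hd2 n hn, sub_zero]
    have hueq : mulS (t ^ (m - 1)) t = t ^ m - f := by
      have hq2' : q2 = 1 := by rwa [sub_eq_zero] at hq21
      rw [hq2', one_mul] at hu
      rw [eq_sub_iff_add_eq, add_comm, ← eq_sub_iff_add_eq]
      exact hu
    obtain ⟨-, hkey0⟩ := hnuc a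
    have hkey := hkey0 (t ^ (m - 1)) htm1S t htS
    rw [hueq, hmul1] at hkey
    obtain ⟨hd3, q3, hq3⟩ := hP (t ^ m - f) (i a)
    have hudeg' : ∀ n, m - 1 < n → coeff (t ^ m - f) n = 0 := fun n hn => hudeg n (by omega)
    have huia : ∀ n, m ≤ n → coeff ((t ^ m - f) * i a) n = 0 := by
      intro n hn
      exact (my_coeff_mul_top hδ hR (t ^ m - f) (i a) (m - 1) 0 hudeg'
        (fun k hk => hconst_high a k hk)).2 n (by omega)
    have hq3z : q3 = 0 := by
      apply hqzero
      intro n hn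
      have hqf : q3 * f = (t ^ m - f) * i a - mulS (t ^ m - f) (i a) :=
        eq_sub_of_add_eq hq3.symm
      rw [hqf, my_coeff_apply_sub, huia n hn, hd3 n hn, sub_zero]
    have hmul3 : mulS (t ^ m - f) (i a) = (t ^ m - f) * i a := by
      rw [hq3z, zero_mul, zero_add] at hq3
      exact hq3.symm
    rw [hmul3] at hkey
    obtain ⟨hd4, q4, hq4⟩ := hP (t ^ (m - 1)) (t * i a)
    rw [← hkey] at hq4
    have hassoc : t ^ (m - 1) * (t * i a) = t ^ m * i a := by rw [← mul_assoc, hpow]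
    rw [hassoc] at hq4
    have hfa : f * i a = q4 * f := by
      have e1 : f * i a = t ^ m * i a - (t ^ m - f) * i a := by rw [sub_mul]; abel
      rw [e1, hq4]
      abel
    have hfia : ∀ n, m < n → coeff (q4 * f) n = 0 := by
      intro n hn
      rw [← hfa]
      exact (my_coeff_mul_top hδ hR f (i a) m 0 hfdeg (fun k hk => hconst_high a k hk)).2
        n (by omega)
    have hq4c : ∀ n, 0 < n → coeff q4 n = 0 := by
      intro n hn
      by_contra hne
      have hq4ne : q4 ≠ 0 := fun h => hne (by rw [h, map_zero]; rfl)
      obtain ⟨k, hk1, hk2⟩ := my_exists_top (coeff := coeff) q4 hq4ne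
      have hkn : n ≤ k := by
        by_contra hlt
        exact hne (hk2 n (by omega))
      have hmt := (my_coeff_mul_top hδ hR q4 f k m hk2 hfdeg).1
      have h0 := hfia (k + m) (by omega)
      rw [hmt, hmonic.1, mul_one] at h0
      exact hk1 h0
    refine ⟨coeff q4 0, ?_⟩
    rw [hfa]
    rw [← my_const_recon hR q4 hq4c]
  -- STEP B : contradiction with simplicity
  have hQ : ∃ d : ℕ, 1 ≤ d ∧ ∃ g : R, (coeff g d = 1 ∧ ∀ n, d < n → coeff g n = 0) ∧
      ∀ a : D, ∃ b : D, g * i a = i b * g :=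
    ⟨m, by omega, f, ⟨hmonic.1, hmonic.2⟩, hsemi⟩
  obtain ⟨d, hdd⟩ : ∃ d, d = Nat.find hQ := ⟨_, rfl⟩
  have hspec := Nat.find_spec hQ
  rw [← hdd] at hspec
  obtain ⟨hd1, g, ⟨hgtop, hgdeg⟩, hgsemi⟩ := hspec
  have hmin : ∀ l, l < d → ¬(1 ≤ l ∧ ∃ g : R, (coeff g l = 1 ∧ ∀ n, l < n → coeff g n = 0) ∧
      ∀ a : D, ∃ b : D, g * i a = i b * g) := fun l hl => Nat.find_min hQ (hdd ▸ hl)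
  have gcomm : ∀ a : D, g * i a = i a * g := by
    intro a
    obtain ⟨b, hb⟩ := hgsemi a
    have h1 := (my_coeff_mul_top hδ hR g (i a) d 0 hgdeg (fun k hk => hconst_high a k hk)).1
    rw [Nat.add_zero, hgtop, one_mul, my_coeff_i hR, Finsupp.single_eq_same] at h1
    have h2 : coeff (i b * g) d = b := by rw [my_coeff_const_mul hR, hgtop, mul_one]
    have hba : b = a := by rw [← h2, ← hb, h1]
    rw [hb, hba]
  obtain ⟨gd, hgd_def⟩ : ∃ x : R, x = t * g - g * t := ⟨_, rfl⟩
  have hgdcoeff : ∀ n, coeff gd n = δ (coeff g n) := fun n => by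
    rw [hgd_def]; exact my_coeff_comm hδ hR g n
  have hgdcomm : ∀ a : D, gd * i a = i a * gd := by
    intro a
    have e2 : (g * t) * i a = i a * (g * t) + i (δ a) * g := by
      calc (g * t) * i a = g * (i a * t + i (δ a)) := by rw [mul_assoc, hR.1 a]
        _ = (g * i a) * t + g * i (δ a) := by rw [mul_add, mul_assoc]
        _ = (i a * g) * t + i (δ a) * g := by rw [gcomm a, gcomm (δ a)]
        _ = i a * (g * t) + i (δ a) * g := by rw [mul_assoc]
    have e1 : (t * g) * i a = i a * (t * g) + i (δ a) * g := by
      calc (t * g) * i a = t * (i a * g) := by rw [mul_assoc, gcomm a]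
        _ = (i a * t + i (δ a)) * g := by rw [← mul_assoc, hR.1 a]
        _ = i a * (t * g) + i (δ a) * g := by rw [add_mul, mul_assoc]
    calc gd * i a = (t * g) * i a - (g * t) * i a := by rw [hgd_def, sub_mul]
      _ = i a * (t * g) - i a * (g * t) := by rw [e1, e2]; abel
      _ = i a * gd := by rw [hgd_def, mul_sub]
  have hgdhigh : ∀ n, 0 < n → coeff gd n = 0 := by
    intro n hn
    by_contra hne
    have hgdne : gd ≠ 0 := fun h => hne (by rw [h, map_zero]; rfl)
    obtain ⟨l, hl1, hl2⟩ := my_exists_top (coeff := coeff) gd hgdne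
    have hln : n ≤ l := by
      by_contra hlt
      exact hne (hl2 n (by omega))
    have hld : l < d := by
      rcases lt_or_ge l d with h | h
      · exact h
      · exfalso
        rcases eq_or_lt_of_le h with heq | h2
        · rw [hgdcoeff l, ← heq, hgtop] at hl1
          exact hl1 (my_deriv_one hδ)
        · rw [hgdcoeff l, hgdeg l h2] at hl1
          exact hl1 (my_deriv_zero hδ)
    apply hmin l hld
    refine ⟨by omega, i (coeff gd l)⁻¹ * gd, ⟨?_, ?_⟩, ?_⟩
    · rw [my_coeff_const_mul hR, inv_mul_cancel₀ hl1]
    · intro n' hn'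
      rw [my_coeff_const_mul hR, hl2 n' hn', mul_zero]
    · intro a
      refine ⟨(coeff gd l)⁻¹ * a * (coeff gd l), ?_⟩
      have hcanc : (coeff gd l)⁻¹ * a * coeff gd l * (coeff gd l)⁻¹ = (coeff gd l)⁻¹ * a := by
        rw [mul_assoc, mul_inv_cancel₀ hl1, mul_one]
      calc i (coeff gd l)⁻¹ * gd * i a = i (coeff gd l)⁻¹ * (i a * gd) := by
            rw [mul_assoc, hgdcomm a]
        _ = i ((coeff gd l)⁻¹ * a) * gd := by rw [← mul_assoc, ← map_mul]
        _ = i ((coeff gd l)⁻¹ * a * coeff gd l) * (i (coeff gd l)⁻¹ * gd) := by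
            rw [← mul_assoc, ← map_mul, hcanc]
  obtain ⟨c, hc_def⟩ : ∃ c : D, c = coeff gd 0 := ⟨_, rfl⟩
  have hgdc : gd = i c := by rw [hc_def]; exact my_const_recon hR gd hgdhigh
  by_cases hc : c = 0
  · have hgd0 : gd = 0 := by rw [hgdc, hc, map_zero]
    have hgt : g * t = t * g := by
      have h0 := hgd0
      rw [hgd_def, sub_eq_zero] at h0
      exact h0.symm
    exact my_central_contra hδ hR hsimple g d hd1
      (by rw [hgtop]; exact one_ne_zero) hgdeg gcomm hgt
  · have hccomm : ∀ a : D, c * a = a * c := by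
      intro a
      have h0 := hgdcomm a
      rw [hgdc, ← map_mul, ← map_mul] at h0
      exact iinj h0
    have hdag : ∀ a : D, coeff g (d - 1) * a + d • δ a = a * coeff g (d - 1) := by
      intro a
      have hL : coeff (g * i a) (d - 1) = coeff g (d - 1) * a + d • δ a := by
        rw [my_coeff_mul hR]
        have hsub : (coeff g).support ⊆ Finset.range (d + 1) := by
          intro j hj
          rw [Finset.mem_range]
          by_contra h
          exact Finsupp.mem_support_iff.mp hj (hgdeg j (by omega))
        rw [Finset.sum_subset hsub (fun j _ hj => by
          rw [Finsupp.notMem_support_iff.mp hj, zero_mul])]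
        have hd1' : d + 1 = (d - 1) + 1 + 1 := by omega
        rw [hd1', Finset.sum_range_succ, Finset.sum_range_succ]
        have hz : ∑ j ∈ Finset.range (d - 1), coeff g j * coeff (t ^ j * i a) (d - 1) = 0 := by
          apply Finset.sum_eq_zero
          intro j hj
          rw [Finset.mem_range] at hj
          rw [(my_tpow_const hδ hR j a).1 (d - 1) (by omega), mul_zero]
        rw [hz, zero_add]
        have e1 : coeff (t ^ (d - 1) * i a) (d - 1) = a := (my_tpow_const hδ hR (d - 1) a).2.1
        have hdd1 : d - 1 + 1 = d := by omega
        rw [hdd1, e1]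
        have e2 : coeff (t ^ d * i a) (d - 1) = d • δ a :=
          (my_tpow_const hδ hR d a).2.2 (d - 1) (by omega)
        rw [e2, hgtop, one_mul]
      have hRr : coeff (i a * g) (d - 1) = a * coeff g (d - 1) := my_coeff_const_mul hR a g (d - 1)
      rw [← hL, gcomm a, hRr]
    by_cases hdD : (d : D) = 0
    · -- characteristic case : q = (i c⁻¹ * g) ^ d
      obtain ⟨h, hh_def⟩ : ∃ h : R, h = i c⁻¹ * g := ⟨_, rfl⟩
      have hcinv : ∀ a : D, c⁻¹ * a = a * c⁻¹ := fun a => (Commute.inv_left₀ (hccomm a)).eq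
      have hcomm_h : ∀ a : D, h * i a = i a * h := by
        intro a
        rw [hh_def]
        calc i c⁻¹ * g * i a = i c⁻¹ * (i a * g) := by rw [mul_assoc, gcomm a]
          _ = i (c⁻¹ * a) * g := by rw [← mul_assoc, ← map_mul]
          _ = i (a * c⁻¹) * g := by rw [hcinv a]
          _ = i a * (i c⁻¹ * g) := by rw [map_mul, mul_assoc]
      have htg : t * g = g * t + i c := by
        have h0 : t * g - g * t = i c := by rw [← hgd_def]; exact hgdc
        rw [← h0]
        abel
      have hig : i (δ c⁻¹) * g = i (δ c⁻¹ * c) * h := by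
        rw [hh_def, ← mul_assoc, ← map_mul, mul_assoc (δ c⁻¹) c c⁻¹, mul_inv_cancel₀ hc,
          mul_one]
      have hw0 : t * h - h * t = i (δ c⁻¹ * c) * h + 1 := by
        have e1 : t * h = h * t + 1 + i (δ c⁻¹) * g := by
          rw [hh_def]
          calc t * (i c⁻¹ * g) = (i c⁻¹ * t + i (δ c⁻¹)) * g := by rw [← mul_assoc, hR.1 c⁻¹]
            _ = i c⁻¹ * (g * t + i c) + i (δ c⁻¹) * g := by rw [add_mul, mul_assoc, htg]
            _ = (i c⁻¹ * g) * t + i c⁻¹ * i c + i (δ c⁻¹) * g := by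
                rw [mul_add, ← mul_assoc]
            _ = (i c⁻¹ * g) * t + 1 + i (δ c⁻¹) * g := by
                rw [← map_mul, inv_mul_cancel₀ hc, map_one]
        rw [e1, hig]
        abel
      obtain ⟨w, hw_def⟩ : ∃ w : R, w = t * h - h * t := ⟨_, rfl⟩
      have hw : w = i (δ c⁻¹ * c) * h + 1 := hw_def.trans hw0
      have hwh : w * h = h * w := by
        rw [hw]
        calc (i (δ c⁻¹ * c) * h + 1) * h = i (δ c⁻¹ * c) * (h * h) + h := by
              rw [add_mul, one_mul, mul_assoc]
          _ = (h * i (δ c⁻¹ * c)) * h + h := by rw [← mul_assoc, hcomm_h (δ c⁻¹ * c)]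
          _ = h * (i (δ c⁻¹ * c) * h + 1) := by rw [mul_add, mul_one, mul_assoc]
      have hind : ∀ k : ℕ, t * h ^ (k + 1) - h ^ (k + 1) * t = (k + 1) • (h ^ k * w) := by
        intro k
        induction k with
        | zero => simp [hw_def]
        | succ k ih =>
          have ih' : t * h ^ (k + 1) = h ^ (k + 1) * t + (k + 1) • (h ^ k * w) := by
            rw [← ih]
            abel
          have e2 : t * h = h * t + w := by rw [hw_def]; abel
          have e4 : h ^ k * w * h = h ^ (k + 1) * w := by
            rw [mul_assoc, hwh, ← mul_assoc, ← pow_succ]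
          have key : t * h ^ (k + 2) = h ^ (k + 2) * t + h ^ (k + 1) * w
              + (k + 1) • (h ^ (k + 1) * w) := by
            calc t * h ^ (k + 2) = (t * h ^ (k + 1)) * h := by rw [mul_assoc, ← pow_succ]
              _ = (h ^ (k + 1) * t) * h + (k + 1) • (h ^ k * w * h) := by
                  rw [ih', add_mul, smul_mul_assoc]
              _ = h ^ (k + 1) * (h * t + w) + (k + 1) • (h ^ (k + 1) * w) := by
                  rw [e4, mul_assoc, e2]
              _ = h ^ (k + 2) * t + h ^ (k + 1) * w + (k + 1) • (h ^ (k + 1) * w) := by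
                  rw [mul_add, ← mul_assoc, ← pow_succ]
          rw [key, add_assoc, add_comm (h ^ (k + 2) * t), add_sub_cancel_right,
            succ_nsmul (h ^ (k + 1) * w) (k + 1)]
          exact add_comm (h ^ (k + 1) * w) ((k + 1) • (h ^ (k + 1) * w))
      have hdpos : d - 1 + 1 = d := by omega
      have hqt0 := hind (d - 1)
      rw [hdpos] at hqt0
      have hz : (d : R) = 0 := by
        rw [← map_natCast i, hdD, map_zero]
      rw [nsmul_eq_mul, hz, zero_mul, sub_eq_zero] at hqt0
      have hqt : h ^ d * t = t * h ^ d := hqt0.symm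
      have hqa : ∀ a : D, h ^ d * i a = i a * h ^ d := fun a =>
        (Commute.pow_left (hcomm_h a) d)
      have hhdeg : ∀ n, d < n → coeff h n = 0 := fun n hn => by
        rw [hh_def, my_coeff_const_mul hR, hgdeg n hn, mul_zero]
      have hhtop : coeff h d = c⁻¹ := by rw [hh_def, my_coeff_const_mul hR, hgtop, mul_one]
      have hp := my_pow_top hδ hR h d hhdeg d
      exact my_central_contra hδ hR hsimple (h ^ d) (d * d)
        (by simpa using Nat.mul_le_mul hd1 hd1)
        (by rw [hp.2, hhtop]; exact pow_ne_zero d (inv_ne_zero hc)) hp.1 hqa hqt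
    · -- (d : D) ≠ 0 : δ is inner, t + i u is central
      obtain ⟨u, hu_def⟩ : ∃ u : D, u = (d : D)⁻¹ * coeff g (d - 1) := ⟨_, rfl⟩
      have hdcomm : ∀ a : D, (d : D)⁻¹ * a = a * (d : D)⁻¹ := fun a =>
        ((Nat.cast_commute d a).inv_left₀).eq
      have hδa : ∀ a : D, δ a = a * u - u * a := by
        intro a
        have h1 := hdag a
        rw [nsmul_eq_mul] at h1
        have h2 : (d : D) * δ a = a * coeff g (d - 1) - coeff g (d - 1) * a :=
          eq_sub_of_add_eq' h1
        have h3 : δ a = (d : D)⁻¹ * ((d : D) * δ a) := by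
          rw [← mul_assoc, inv_mul_cancel₀ hdD, one_mul]
        rw [h3, h2, hu_def, mul_sub, ← mul_assoc, ← mul_assoc, hdcomm a, mul_assoc]
      have hδu : δ u = 0 := by rw [hδa u, sub_self]
      obtain ⟨s, hs_def⟩ : ∃ s : R, s = t + i u := ⟨_, rfl⟩
      have hsa : ∀ a : D, s * i a = i a * s := by
        intro a
        rw [hs_def]
        calc (t + i u) * i a = i a * t + i (δ a) + i (u * a) := by
              rw [add_mul, hR.1 a, ← map_mul]
          _ = i a * t + i (a * u) := by
              rw [hδa a, add_assoc, ← map_add, sub_add_cancel]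
          _ = i a * (t + i u) := by rw [mul_add, ← map_mul]
      have hst : s * t = t * s := by
        have h0 : t * i u = i u * t := by rw [hR.1 u, hδu, map_zero, add_zero]
        rw [hs_def, add_mul, mul_add, h0]
      have hstop : coeff s 1 = 1 := by
        rw [hs_def, my_coeff_apply_add, my_coeff_t hR, my_coeff_i hR, Finsupp.single_eq_same,
          Finsupp.single_apply, if_neg (by omega), add_zero]
      have hsdeg : ∀ n, 1 < n → coeff s n = 0 := fun n hn => by
        rw [hs_def, my_coeff_apply_add, my_coeff_t hR, my_coeff_i hR,
          Finsupp.single_apply, if_neg (by omega), Finsupp.single_apply, if_neg (by omega),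
          add_zero]
      exact my_central_contra hδ hR hsimple s 1 le_rfl
        (by rw [hstop]; exact one_ne_zero) hsdeg hsa hst
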